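/- Let n, q ≥ 1, L ≥ 1, c ≥ 0. Let W_1, …, W_{L−1} be real n×n matrices, W_L a real q×n matrix, and b_1, …, b_{L−1} ∈ ℝⁿ, b_L ∈ ℝ^q, where every row of every W_l has Euclidean norm at most c. Define F : ℝⁿ → ℝ^q by h_0(x) = x, h_l(x) = ReLU(W_l h_{l−1}(x) + b_l) for l = 1, …, L−1, and F(x) = W_L h_{L−1}(x) + b_L. Then for all x, ε ∈ ℝⁿ, ‖F(x + ε) − F(x)‖_∞ ≤ n^{(L−1)/2} · c^L · ‖ε‖₂. -/

import Mathlib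

/-- Entrywise ReLU on vectors. -/
noncomputable def relu {p : ℕ} (v : Fin p → ℝ) : Fin p → ℝ := fun i => max (v i) 0

/-- The netHidden layers of a fully connected ReLU network:
`netHidden W b 0 x = x` and `netHidden W b l x = ReLU(W l (netHidden W b (l-1) x) + b l)`. -/
noncomputable def netHidden {n : ℕ} (W : ℕ → Matrix (Fin n) (Fin n) ℝ) (b : ℕ → Fin n → ℝ) :
    ℕ → (Fin n → ℝ) → Fin n → ℝ
  | 0 => fun x => x
  | l + 1 => fun x => relu ((W (l + 1)).mulVec (netHidden W b l x) + b (l + 1))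

lemma cauchy_abs {m : ℕ} (a d : Fin m → ℝ) :
    |∑ j, a j * d j| ≤ Real.sqrt (∑ j, a j ^ 2) * Real.sqrt (∑ j, d j ^ 2) := by
  have h := Finset.sum_mul_sq_le_sq_mul_sq Finset.univ a d
  have h1 : |∑ j, a j * d j| = Real.sqrt ((∑ j, a j * d j) ^ 2) := by
    rw [Real.sqrt_sq_eq_abs]
  rw [h1, ← Real.sqrt_mul (by positivity)]
  exact Real.sqrt_le_sqrt h

lemma relu_diff {a b : ℝ} : |max a 0 - max b 0| ≤ |a - b| :=
  abs_max_sub_max_le_abs a b 0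

/-- Lipschitz bound for an `L`-layer fully connected ReLU network with netHidden
widths `n`, whose weight matrices all have rows of Euclidean norm at most `c`:
`‖F(x + ε) − F(x)‖_∞ ≤ n^{(L−1)/2} · c^L · ‖ε‖₂`. -/
theorem deep_relu_lipschitz (n q L : ℕ) (hn : 1 ≤ n) (hq : 1 ≤ q) (hL : 1 ≤ L)
    (c : ℝ) (hc : 0 ≤ c)
    (W : ℕ → Matrix (Fin n) (Fin n) ℝ) (b : ℕ → Fin n → ℝ)
    (WL : Matrix (Fin q) (Fin n) ℝ) (bL : Fin q → ℝ)
    (hW : ∀ l, 1 ≤ l → l ≤ L - 1 → ∀ i, Real.sqrt (∑ j, W l i j ^ 2) ≤ c)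
    (hWL : ∀ i, Real.sqrt (∑ j, WL i j ^ 2) ≤ c)
    (F : (Fin n → ℝ) → Fin q → ℝ)
    (hF : ∀ x, F x = WL.mulVec (netHidden W b (L - 1) x) + bL) :
    ∀ x ε : Fin n → ℝ, ∀ j : Fin q,
      |F (x + ε) j - F x j| ≤
        Real.sqrt ((n : ℝ) ^ (L - 1)) * c ^ L * Real.sqrt (∑ i, ε i ^ 2) := by
  intro x ε j
  have hsqn : (0:ℝ) ≤ Real.sqrt n := Real.sqrt_nonneg _
  have hε : (0:ℝ) ≤ Real.sqrt (∑ i, ε i ^ 2) := Real.sqrt_nonneg _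
  -- inductive bound on hidden layers
  have key : ∀ l, l ≤ L - 1 →
      Real.sqrt (∑ i, (netHidden W b l (x + ε) i - netHidden W b l x i) ^ 2) ≤
        (Real.sqrt n * c) ^ l * Real.sqrt (∑ i, ε i ^ 2) := by
    intro l
    induction l with
    | zero => intro _; simp [netHidden]
    | succ l ih =>
      intro hle
      have hle' : l ≤ L - 1 := Nat.le_of_succ_le hle
      have ihl := ih hle'
      set u := netHidden W b l (x + ε)
      set v := netHidden W b l x
      have hrow := hW (l + 1) (Nat.le_add_left 1 l) hle
      -- entrywise bound
      have hent : ∀ i, |netHidden W b (l+1) (x+ε) i - netHidden W b (l+1) x i| ≤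
          c * Real.sqrt (∑ k, (u k - v k) ^ 2) := by
        intro i
        have h1 : |netHidden W b (l+1) (x+ε) i - netHidden W b (l+1) x i| ≤
            |((W (l+1)).mulVec u + b (l+1)) i - ((W (l+1)).mulVec v + b (l+1)) i| := by
          simp only [netHidden, relu]
          exact relu_diff
        have h2 : ((W (l+1)).mulVec u + b (l+1)) i - ((W (l+1)).mulVec v + b (l+1)) i =
            ∑ k, W (l+1) i k * (u k - v k) := by
          simp [Matrix.mulVec, dotProduct, mul_sub, Finset.sum_sub_distrib]
        refine h1.trans ?_
        rw [h2]
        calc |∑ k, W (l+1) i k * (u k - v k)|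
            ≤ Real.sqrt (∑ k, W (l+1) i k ^ 2) * Real.sqrt (∑ k, (u k - v k) ^ 2) :=
              cauchy_abs _ _
          _ ≤ c * Real.sqrt (∑ k, (u k - v k) ^ 2) := by
              apply mul_le_mul_of_nonneg_right (hrow i) (Real.sqrt_nonneg _)
      -- sum the squares
      have hsum : (∑ i, (netHidden W b (l+1) (x+ε) i - netHidden W b (l+1) x i) ^ 2) ≤
          (n : ℝ) * (c * Real.sqrt (∑ k, (u k - v k) ^ 2)) ^ 2 := by
        calc (∑ i, (netHidden W b (l+1) (x+ε) i - netHidden W b (l+1) x i) ^ 2)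
            ≤ ∑ _i : Fin n, (c * Real.sqrt (∑ k, (u k - v k) ^ 2)) ^ 2 := by
              apply Finset.sum_le_sum
              intro i _
              have := hent i
              have h0 : (0:ℝ) ≤ c * Real.sqrt (∑ k, (u k - v k) ^ 2) := by positivity
              calc (netHidden W b (l+1) (x+ε) i - netHidden W b (l+1) x i) ^ 2
                  = |netHidden W b (l+1) (x+ε) i - netHidden W b (l+1) x i| ^ 2 := by
                    rw [sq_abs]
                _ ≤ (c * Real.sqrt (∑ k, (u k - v k) ^ 2)) ^ 2 :=
                    pow_le_pow_left₀ (abs_nonneg _) this 2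
          _ = (n : ℝ) * (c * Real.sqrt (∑ k, (u k - v k) ^ 2)) ^ 2 := by
              simp [Finset.sum_const, mul_comm]
      calc Real.sqrt (∑ i, (netHidden W b (l+1) (x+ε) i - netHidden W b (l+1) x i) ^ 2)
          ≤ Real.sqrt ((n : ℝ) * (c * Real.sqrt (∑ k, (u k - v k) ^ 2)) ^ 2) :=
            Real.sqrt_le_sqrt hsum
        _ = Real.sqrt n * (c * Real.sqrt (∑ k, (u k - v k) ^ 2)) := by
            rw [Real.sqrt_mul (by positivity), Real.sqrt_sq (by positivity)]
        _ ≤ Real.sqrt n * (c * ((Real.sqrt n * c) ^ l * Real.sqrt (∑ i, ε i ^ 2))) := by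
            apply mul_le_mul_of_nonneg_left _ hsqn
            exact mul_le_mul_of_nonneg_left ihl hc
        _ = (Real.sqrt n * c) ^ (l + 1) * Real.sqrt (∑ i, ε i ^ 2) := by ring
  have hlast := key (L - 1) le_rfl
  set u := netHidden W b (L - 1) (x + ε)
  set v := netHidden W b (L - 1) x
  have hdiff : F (x + ε) j - F x j = ∑ k, WL j k * (u k - v k) := by
    rw [hF, hF]
    simp [Matrix.mulVec, dotProduct, mul_sub, Finset.sum_sub_distrib]
    rfl
  rw [hdiff]
  calc |∑ k, WL j k * (u k - v k)|
      ≤ Real.sqrt (∑ k, WL j k ^ 2) * Real.sqrt (∑ k, (u k - v k) ^ 2) := cauchy_abs _ _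
    _ ≤ c * ((Real.sqrt n * c) ^ (L - 1) * Real.sqrt (∑ i, ε i ^ 2)) := by
        apply mul_le_mul (hWL j) hlast (Real.sqrt_nonneg _) hc
    _ = Real.sqrt n ^ (L - 1) * (c * c ^ (L - 1)) * Real.sqrt (∑ i, ε i ^ 2) := by
        rw [mul_pow]; ring
    _ = Real.sqrt ((n : ℝ) ^ (L - 1)) * c ^ L * Real.sqrt (∑ i, ε i ^ 2) := by
        have h1 : Real.sqrt ((n : ℝ) ^ (L - 1)) = Real.sqrt (n : ℝ) ^ (L - 1) := by
          rw [show ((n:ℝ) ^ (L-1)) = (Real.sqrt (n:ℝ) ^ (L-1)) ^ 2 by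
            rw [← pow_mul, mul_comm, pow_mul, Real.sq_sqrt (by positivity)],
            Real.sqrt_sq (by positivity)]
        have h2 : c * c ^ (L - 1) = c ^ L := by
          rw [← pow_succ']; congr 1; omega
        rw [h1, h2]
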